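/- For any tiling T of a convex n-gon with Scott permutation σ = Scott(T), there is no vertex i with σ(i) = i+1 (indices mod n). -/

import Mathlib

open scoped Classical

/-!  Combinatorial model of tilings of a convex `n`-gon.
The vertices of the polygon are `ZMod n`, listed clockwise as `0,1,...,n-1`.
A tile is recorded as the finset of its vertices. -/

/-- The next vertex of `Q` strictly clockwise after `a`. -/
noncomputable def cnext (n : ℕ) (Q : Finset (ZMod n)) (a : ZMod n) : ZMod n :=
  if h : ∃ k : ℕ, 0 < k ∧ k ≤ n ∧ a + (k : ZMod n) ∈ Q then
    a + ((Nat.find h : ℕ) : ZMod n)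
  else a

/-- The previous vertex of `Q` strictly anticlockwise before `a`. -/
noncomputable def cprev (n : ℕ) (Q : Finset (ZMod n)) (a : ZMod n) : ZMod n :=
  if h : ∃ k : ℕ, 0 < k ∧ k ≤ n ∧ a - (k : ZMod n) ∈ Q then
    a - ((Nat.find h : ℕ) : ZMod n)
  else a

/-- `(a,b)` is a (directed, clockwise) edge of the tile `Q`:
`b` is the next vertex of `Q` clockwise after `a`. -/
noncomputable def IsEdge (n : ℕ) (Q : Finset (ZMod n)) (a b : ZMod n) : Prop :=
  a ∈ Q ∧ b ∈ Q ∧ a ≠ b ∧ b = cnext n Q a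

/-- `x` lies strictly inside the clockwise arc from `a` to `b`. -/
def Between (n : ℕ) (a x b : ZMod n) : Prop :=
  0 < (x - a).val ∧ (x - a).val < (b - a).val

/-- The chords `{a,b}` and `{c,d}` of a convex `m`-gon cross in its interior. -/
def Crosses (m : ℕ) (a b c d : ZMod m) : Prop :=
  Between m a c b ∧ Between m b d a

/-- A tiling of the convex `n`-gon by pairwise non-crossing diagonals, recorded by
its set of tiles.  Every tile has at least 3 vertices, every boundary edge
`[i,i+1]` is an edge of exactly one tile, every diagonal (non-boundary edge of a
tile) is shared with exactly one other tile (traversed in the opposite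
direction), two distinct tiles meet in at most one edge, and edges of tiles do
not cross. -/
structure PolygonTiling (n : ℕ) where
  tiles : Finset (Finset (ZMod n))
  three_le : ∀ Q ∈ tiles, 3 ≤ Q.card
  boundary_edge : ∀ i : ZMod n, ∃! Q, Q ∈ tiles ∧ IsEdge n Q i (i + 1)
  diag_shared : ∀ Q ∈ tiles, ∀ a b : ZMod n, IsEdge n Q a b → b ≠ a + 1 →
    ∃! Q', Q' ∈ tiles ∧ Q' ≠ Q ∧ IsEdge n Q' b a
  inter_small : ∀ Q ∈ tiles, ∀ Q' ∈ tiles, Q ≠ Q' → (Q ∩ Q').card ≤ 2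
  noncross : ∀ Q ∈ tiles, ∀ Q' ∈ tiles, ∀ a b c d : ZMod n,
    IsEdge n Q a b → IsEdge n Q' c d → ¬ Crosses n a b c d

/-- The set of diagonals of a tiling, as unordered pairs of vertices. -/
def diagonalsSet (n : ℕ) (T : PolygonTiling n) : Set (Finset (ZMod n)) :=
  {e | ∃ Q ∈ T.tiles, ∃ a b : ZMod n, IsEdge n Q a b ∧ b ≠ a + 1 ∧ e = {a, b}}

/-- One step of Scott's strand construction.  A state `(Q, a)` means the strand is
entering tile `Q` through its directed edge `(a, cnext Q a)`.  Inside `Q` the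
strand uses the segment parallel to the edge `[cprev Q a, a]`, oriented from `a`
towards `p := cprev Q a`, leaving `Q` through the edge `(pp, p)` where
`pp := cprev Q p`.  If that edge is a boundary edge the strand terminates at the
vertex `p`; otherwise it continues into the unique other tile having this edge. -/
noncomputable def scottStep (n : ℕ) (T : PolygonTiling n) :
    Finset (ZMod n) × ZMod n → (Finset (ZMod n) × ZMod n) ⊕ ZMod n := fun s =>
  let Q := s.1
  let a := s.2
  let p := cprev n Q a
  let pp := cprev n Q p
  if p = pp + 1 then Sum.inr p
  else if h : ∃ Q', Q' ∈ T.tiles ∧ Q' ≠ Q ∧ IsEdge n Q' p pp then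
    Sum.inl (Classical.choose h, p)
  else Sum.inr p

/-- The tile in which the strand starting at vertex `x` begins: the unique tile
containing the boundary edge `(x, x+1)`. -/
noncomputable def startTile (n : ℕ) (T : PolygonTiling n) (x : ZMod n) :
    Finset (ZMod n) :=
  Classical.choose (T.boundary_edge x)

/-- The sequence of states of the strand starting at vertex `x`
(`none` after the strand has terminated). -/
noncomputable def strandSeq (n : ℕ) (T : PolygonTiling n) (x : ZMod n) :
    ℕ → Option (Finset (ZMod n) × ZMod n)
  | 0 => some (startTile n T x, x)
  | k + 1 =>
    match strandSeq n T x k with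
    | none => none
    | some s =>
      match scottStep n T s with
      | Sum.inl s' => some s'
      | Sum.inr _ => none

/-- The strand starting at `x` uses a strand segment of tile `Q`, entering `Q`
in state `s = (Q, a)`. -/
def StrandVisits (n : ℕ) (T : PolygonTiling n) (x : ZMod n)
    (s : Finset (ZMod n) × ZMod n) : Prop :=
  ∃ k : ℕ, strandSeq n T x k = some s

/-- Follow a strand for at most `fuel` steps, returning its final vertex. -/
noncomputable def scottRun (n : ℕ) (T : PolygonTiling n) :
    ℕ → Finset (ZMod n) × ZMod n → ZMod n
  | 0, s => s.2
  | k + 1, s =>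
    match scottStep n T s with
    | Sum.inr y => y
    | Sum.inl s' => scottRun n T k s'

/-- The Scott map of the tiling `T`: the strand starting at vertex `x` ends at
vertex `scott n T x`.  (A strand uses at most one segment per tile, so
`T.tiles.card` steps always suffice.) -/
noncomputable def scott (n : ℕ) (T : PolygonTiling n) (x : ZMod n) : ZMod n :=
  scottRun n T T.tiles.card (startTile n T x, x)

/-- A triangulation: all tiles are triangles. -/
def IsTriangulation (n : ℕ) (T : PolygonTiling n) : Prop :=
  ∀ Q ∈ T.tiles, Q.card = 3

/-- An ear of a tiling: a tile exactly one of whose edges is a diagonal. -/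
noncomputable def IsEar (n : ℕ) (T : PolygonTiling n) (Q : Finset (ZMod n)) : Prop :=
  Q ∈ T.tiles ∧ ∃! p : ZMod n × ZMod n, IsEdge n Q p.1 p.2 ∧ p.2 ≠ p.1 + 1

/-- A vertex is simple if it is not an endpoint of any diagonal. -/
def IsSimpleVertex (n : ℕ) (T : PolygonTiling n) (v : ZMod n) : Prop :=
  ∀ e ∈ diagonalsSet n T, v ∉ e

/-- The open dual graph of a tiling: one vertex per tile, two tiles adjacent iff
they share a diagonal. -/
noncomputable def dualGraph (n : ℕ) (T : PolygonTiling n) :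
    SimpleGraph {Q // Q ∈ T.tiles} where
  Adj Q Q' := Q ≠ Q' ∧ ∃ a b : ZMod n, b ≠ a + 1 ∧
    ((IsEdge n Q.1 a b ∧ IsEdge n Q'.1 b a) ∨ (IsEdge n Q.1 b a ∧ IsEdge n Q'.1 a b))
  symm := by
    refine ⟨?_⟩
    rintro Q Q' ⟨hne, a, b, hb, h⟩
    refine ⟨hne.symm, a, b, hb, ?_⟩
    rcases h with ⟨h1, h2⟩ | ⟨h1, h2⟩
    · exact Or.inr ⟨h2, h1⟩
    · exact Or.inl ⟨h2, h1⟩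
  loopless := by refine ⟨?_⟩; rintro Q ⟨hne, -⟩; exact hne rfl

/-- `T'` is obtained from `T` by a single flip: a quadrilateral `a,b,c,d`
(clockwise) tiled by the triangles `{a,b,c}, {a,c,d}` (diagonal `[a,c]`) is
retiled by the triangles `{a,b,d}, {b,c,d}` (diagonal `[b,d]`). -/
def FlipStep (n : ℕ) (T T' : PolygonTiling n) : Prop :=
  ∃ a b c d : ZMod n, Between n a b c ∧ Between n c d a ∧
    ({a, b, c} : Finset (ZMod n)) ∈ T.tiles ∧ ({a, c, d} : Finset (ZMod n)) ∈ T.tiles ∧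
    T'.tiles = (T.tiles \ {({a, b, c} : Finset (ZMod n)), {a, c, d}}) ∪ {{a, b, d}, {b, c, d}}

/-- Flip equivalence: the equivalence relation generated by flips. -/
def FlipEquiv (n : ℕ) (T T' : PolygonTiling n) : Prop :=
  Relation.EqvGen (FlipStep n) T T'

/-- The midpoint of the (clockwise) tile edge starting at vertex `a`, recorded as
a vertex of the refined `2n`-gon (vertex `v` of the polygon becomes `2v`). -/
def midpt (n : ℕ) (a : ZMod n) : ZMod (2 * n) := ((2 * a.val + 1 : ℕ) : ZMod (2 * n))

/-- The first vertex of the edge through which the strand segment entering tile `Q`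
in state `(Q,a)` leaves `Q`. -/
noncomputable def segTarget (n : ℕ) (Q : Finset (ZMod n)) (a : ZMod n) : ZMod n :=
  cprev n Q (cprev n Q a)

/-- The strand segments of tile `Q` entering in states `(Q,a)` and `(Q,c)` cross
inside `Q` (their chords, joining midpoints of edges of `Q`, interleave). -/
noncomputable def SegCross (n : ℕ) (Q : Finset (ZMod n)) (a c : ZMod n) : Prop :=
  Crosses (2 * n) (midpt n a) (midpt n (segTarget n Q a))
    (midpt n c) (midpt n (segTarget n Q c))

/-- The set of tiles inside which the strands starting at `x` and at `y` cross. -/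
noncomputable def crossingTiles (n : ℕ) (T : PolygonTiling n) (x y : ZMod n) :
    Set (Finset (ZMod n)) :=
  {Q | Q ∈ T.tiles ∧ ∃ a c : ZMod n,
    StrandVisits n T x (Q, a) ∧ StrandVisits n T y (Q, c) ∧ SegCross n Q a c}

/-- `v` lies on the closed clockwise arc from `i` to `j`. -/
def InArc (n : ℕ) (i j v : ZMod n) : Prop := (v - i).val ≤ (j - i).val

section StmtNineHelpers

variable {n : ℕ} [NeZero n] {Q : Finset (ZMod n)} {a x : ZMod n}

private lemma cnext_exists' (ha : a ∈ Q) :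
    ∃ k : ℕ, 0 < k ∧ k ≤ n ∧ a + (k : ZMod n) ∈ Q :=
  ⟨n, Nat.pos_of_ne_zero (NeZero.ne n), le_rfl, by simp [ZMod.natCast_self, ha]⟩

private lemma cprev_exists' (ha : a ∈ Q) :
    ∃ k : ℕ, 0 < k ∧ k ≤ n ∧ a - (k : ZMod n) ∈ Q :=
  ⟨n, Nat.pos_of_ne_zero (NeZero.ne n), le_rfl, by simp [ZMod.natCast_self, ha]⟩

private lemma cnext_mem' (ha : a ∈ Q) : cnext n Q a ∈ Q := by
  rw [cnext, dif_pos (cnext_exists' ha)]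
  exact (Nat.find_spec (cnext_exists' ha)).2.2

private lemma cprev_mem' (ha : a ∈ Q) : cprev n Q a ∈ Q := by
  rw [cprev, dif_pos (cprev_exists' ha)]
  exact (Nat.find_spec (cprev_exists' ha)).2.2

private lemma val_sub_pos' (h : x ≠ a) : 0 < (x - a).val :=
  ZMod.val_pos.mpr (sub_ne_zero.mpr h)

private lemma val_sub_rev' (h : x ≠ a) : (a - x).val = n - (x - a).val := by
  haveI : NeZero (x - a) := ⟨sub_ne_zero.mpr h⟩
  rw [show a - x = -(x - a) by ring, ZMod.val_neg_of_ne_zero]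

private lemma cnext_min' (ha : a ∈ Q) (hx : x ∈ Q) (hxa : x ≠ a) :
    (cnext n Q a - a).val ≤ (x - a).val := by
  have hex := cnext_exists' ha
  rw [cnext, dif_pos hex, add_sub_cancel_left]
  have hmem : a + (((x - a).val : ℕ) : ZMod n) ∈ Q := by
    rw [ZMod.natCast_val, ZMod.cast_id]; simpa using hx
  have hle : Nat.find hex ≤ (x - a).val :=
    Nat.find_le ⟨val_sub_pos' hxa, (ZMod.val_lt _).le, hmem⟩
  calc ((Nat.find hex : ℕ) : ZMod n).val ≤ Nat.find hex := by
        rw [ZMod.val_natCast]; exact Nat.mod_le _ _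
    _ ≤ _ := hle

private lemma cprev_min' (ha : a ∈ Q) (hx : x ∈ Q) (hxa : x ≠ a) :
    (a - cprev n Q a).val ≤ (a - x).val := by
  have hex := cprev_exists' ha
  rw [cprev, dif_pos hex, sub_sub_cancel]
  have hmem : a - (((a - x).val : ℕ) : ZMod n) ∈ Q := by
    rw [ZMod.natCast_val, ZMod.cast_id]; simpa using hx
  have hle : Nat.find hex ≤ (a - x).val :=
    Nat.find_le ⟨val_sub_pos' (Ne.symm hxa), (ZMod.val_lt _).le, hmem⟩
  calc ((Nat.find hex : ℕ) : ZMod n).val ≤ Nat.find hex := by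
        rw [ZMod.val_natCast]; exact Nat.mod_le _ _
    _ ≤ _ := hle

private lemma cprev_ne' (ha : a ∈ Q) (hx : x ∈ Q) (hxa : x ≠ a) : cprev n Q a ≠ a := by
  have hex := cprev_exists' ha
  have hmem : a - (((a - x).val : ℕ) : ZMod n) ∈ Q := by
    rw [ZMod.natCast_val, ZMod.cast_id]; simpa using hx
  have hle : Nat.find hex ≤ (a - x).val :=
    Nat.find_le ⟨val_sub_pos' (Ne.symm hxa), (ZMod.val_lt _).le, hmem⟩
  have hlt : Nat.find hex < n := lt_of_le_of_lt hle (ZMod.val_lt _)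
  have hpos : 0 < Nat.find hex := (Nat.find_spec hex).1
  rw [cprev, dif_pos hex]
  intro hcon
  have h0 : ((Nat.find hex : ℕ) : ZMod n) = 0 := sub_eq_self.mp hcon
  rw [ZMod.natCast_eq_zero_iff] at h0
  exact absurd (Nat.le_of_dvd hpos h0) (by omega)

private lemma cnext_ne' (ha : a ∈ Q) (hx : x ∈ Q) (hxa : x ≠ a) : cnext n Q a ≠ a := by
  have hex := cnext_exists' ha
  have hmem : a + (((x - a).val : ℕ) : ZMod n) ∈ Q := by
    rw [ZMod.natCast_val, ZMod.cast_id]; simpa using hx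
  have hle : Nat.find hex ≤ (x - a).val :=
    Nat.find_le ⟨val_sub_pos' hxa, (ZMod.val_lt _).le, hmem⟩
  have hlt : Nat.find hex < n := lt_of_le_of_lt hle (ZMod.val_lt _)
  have hpos : 0 < Nat.find hex := (Nat.find_spec hex).1
  rw [cnext, dif_pos hex]
  intro hcon
  have h0 : ((Nat.find hex : ℕ) : ZMod n) = 0 := add_eq_left.mp hcon
  rw [ZMod.natCast_eq_zero_iff] at h0
  exact absurd (Nat.le_of_dvd hpos h0) (by omega)

private lemma cprev_ne_cnext' (hcard : 3 ≤ Q.card) (ha : a ∈ Q) :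
    cprev n Q a ≠ cnext n Q a := by
  intro heq
  set b := cnext n Q a with hb
  have hbQ : b ∈ Q := cnext_mem' ha
  have hcard2 : 1 < (Q.erase b).card := by
    have := Finset.card_erase_of_mem hbQ
    omega
  obtain ⟨c, hcE, hca⟩ := Finset.exists_mem_ne hcard2 a
  have hcb : c ≠ b := Finset.ne_of_mem_erase hcE
  have hcQ : c ∈ Q := Finset.mem_of_mem_erase hcE
  have hba : b ≠ a := cnext_ne' ha hcQ hca
  have h1 : (b - a).val ≤ (c - a).val := cnext_min' ha hcQ hca
  have h2 : (a - b).val ≤ (a - c).val := by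
    have := cprev_min' ha hcQ hca
    rwa [heq] at this
  rw [val_sub_rev' hba, val_sub_rev' hca] at h2
  have hvb := ZMod.val_lt (b - a)
  have hvc := ZMod.val_lt (c - a)
  have heqv : (c - a).val = (b - a).val := by omega
  have : c - a = b - a := ZMod.val_injective n heqv
  exact hcb (by have := congrArg (· + a) this; simpa using this)

end StmtNineHelpers

theorem stmt9 (n : ℕ) (hn : 3 ≤ n) (T : PolygonTiling n) (i : ZMod n) :
    scott n T i ≠ i + 1 := by
  haveI : NeZero n := ⟨by omega⟩
  haveI : Fact (1 < n) := ⟨by omega⟩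
  suffices H : ∀ fuel : ℕ, ∀ s : Finset (ZMod n) × ZMod n, s.1 ∈ T.tiles → s.2 ∈ s.1 →
      0 < (i + 1 - s.2).val → (i + 1 - s.2).val ≤ (cnext n s.1 s.2 - s.2).val →
      scottRun n T fuel s ≠ i + 1 by
    obtain ⟨⟨hmem, hedge⟩, -⟩ := Classical.choose_spec (T.boundary_edge i)
    have hc : cnext n (startTile n T i) i = i + 1 := hedge.2.2.2.symm
    have h1 : (i + 1 - i).val = 1 := by
      rw [show i + 1 - i = 1 by ring, ZMod.val_one]
    show scottRun n T T.tiles.card (startTile n T i, i) ≠ i + 1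
    exact H T.tiles.card (startTile n T i, i) hmem hedge.1
      (by show 0 < (i + 1 - i).val; rw [h1]; omega)
      (le_of_eq (by show (i + 1 - i).val = _; rw [hc]))
  intro fuel
  induction fuel with
  | zero =>
    intro s _ _ h3 _ heq
    have hs : s.2 = i + 1 := heq
    rw [hs] at h3
    simp at h3
  | succ k ih =>
    intro s hQT ha h3 h4
    have hcard : 3 ≤ s.1.card := T.three_le s.1 hQT
    set Q := s.1 with hQdef
    set a := s.2 with hadef
    set b := cnext n Q a with hbdef
    set p := cprev n Q a with hpdef
    set pp := cprev n Q p with hppdef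
    have hbQ : b ∈ Q := cnext_mem' ha
    have hpQ : p ∈ Q := cprev_mem' ha
    obtain ⟨w, hwQ, hwa⟩ := Finset.exists_mem_ne (s := Q) (by omega) a
    have hpa : p ≠ a := cprev_ne' ha hwQ hwa
    have hba : b ≠ a := cnext_ne' ha hwQ hwa
    have hpb : p ≠ b := cprev_ne_cnext' hcard ha
    have hppQ : pp ∈ Q := cprev_mem' hpQ
    have hppp : pp ≠ p := cprev_ne' hpQ ha (Ne.symm hpa)
    -- the terminal vertex is not i+1
    have hAne : p ≠ i + 1 := by
      intro hcon
      have h5 : (b - a).val ≤ (p - a).val := cnext_min' ha hpQ hpa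
      have h6 : (p - a).val ≤ (b - a).val := by rw [hcon]; exact h4
      have : p - a = b - a := ZMod.val_injective n (by omega)
      exact hpb (by have := congrArg (· + a) this; simpa using this)
    -- invariant is preserved
    have hkey : (b - a).val < (p - a).val := by
      rcases (cnext_min' ha hpQ hpa).lt_or_eq with h | h
      · exact h
      · exfalso
        have : b - a = p - a := ZMod.val_injective n h
        exact hpb.symm (by have := congrArg (· + a) this; simpa using this)
    have hvp : (p - a).val < n := ZMod.val_lt _
    have hap : (a - p).val = n - (p - a).val := val_sub_rev' hpa
    have hsum1 : (i + 1 - a).val + (a - p).val < n := by omega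
    have hc1 : (i + 1 - p).val = (i + 1 - a).val + (a - p).val := by
      rw [show i + 1 - p = (i + 1 - a) + (a - p) by ring]
      exact ZMod.val_add_of_lt hsum1
    have hsum2 : (b - a).val + (a - p).val < n := by omega
    have hc2 : (b - p).val = (b - a).val + (a - p).val := by
      rw [show b - p = (b - a) + (a - p) by ring]
      exact ZMod.val_add_of_lt hsum2
    have hmax : (b - p).val ≤ (pp - p).val := by
      have h7 : (p - pp).val ≤ (p - b).val := cprev_min' hpQ hbQ (Ne.symm hpb)
      have e1 : (p - pp).val = n - (pp - p).val := val_sub_rev' hppp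
      have e2 : (p - b).val = n - (b - p).val := val_sub_rev' (Ne.symm hpb)
      have l1 := ZMod.val_lt (pp - p)
      have l2 := ZMod.val_lt (b - p)
      omega
    have hinv1 : 0 < (i + 1 - p).val := by omega
    have hinv2 : (i + 1 - p).val ≤ (pp - p).val := by omega
    -- unfold one step of the run
    show scottRun n T (k + 1) s ≠ i + 1
    rw [scottRun]
    simp only [scottStep, ← hQdef, ← hadef, ← hpdef, ← hppdef]
    by_cases h1 : p = pp + 1
    · rw [if_pos h1]
      exact hAne
    · rw [if_neg h1]
      by_cases h2 : ∃ Q', Q' ∈ T.tiles ∧ Q' ≠ Q ∧ IsEdge n Q' p pp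
      · rw [dif_pos h2]
        obtain ⟨hQ't, _, hEdge⟩ := Classical.choose_spec h2
        have hcn : cnext n (Classical.choose h2) p = pp := hEdge.2.2.2.symm
        exact ih (Classical.choose h2, p) hQ't hEdge.1 hinv1 (by rw [hcn]; exact hinv2)
      · rw [dif_neg h2]
        exact hAne
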